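/- Stationarity of the padded points (first part of the transition-state construction theorem): if (β⋆,γ⋆) ∈ ℝ^p × ℝ^p is a critical point of E_p (i.e., the gradient of E_p vanishes at (β⋆,γ⋆)), then for every i with 1 ≤ i ≤ p+1 the padded point Γ^{p+1}(i,i), and for every i with 1 ≤ i ≤ p the padded point Γ^{p+1}(i,i+1), is a critical point of E_{p+1}. -/

import Mathlib

open Matrix Complex

noncomputable section

/-- Computational basis index set for `n` qubits, identified with `Fin 2 ^ n` via binary digits. -/
abbrev QIdx (n : ℕ) := Fin n → Fin 2

/-- The Pauli X matrix. -/
def pauliX : Matrix (Fin 2) (Fin 2) ℂ := !![0, 1; 1, 0]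

/-- The Pauli Z matrix. -/
def pauliZ : Matrix (Fin 2) (Fin 2) ℂ := !![1, 0; 0, -1]

/-- The `n`-fold Kronecker product with `M` in the `i`-th tensor factor and the 2×2 identity in
every other factor, realized as a matrix on `ℂ^(2^n)` with indices `Fin n → Fin 2`. -/
def pauliAt {n : ℕ} (M : Matrix (Fin 2) (Fin 2) ℂ) (i : Fin n) :
    Matrix (QIdx n) (QIdx n) ℂ :=
  Matrix.of fun s t => ∏ j, if j = i then M (s j) (t j) else if s j = t j then 1 else 0

/-- `σ^x_i`. -/
def sigmaX {n : ℕ} (i : Fin n) : Matrix (QIdx n) (QIdx n) ℂ := pauliAt pauliX i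

/-- `σ^z_i`. -/
def sigmaZ {n : ℕ} (i : Fin n) : Matrix (QIdx n) (QIdx n) ℂ := pauliAt pauliZ i

lemma sigmaZ_eq_diagonal {n : ℕ} (i : Fin n) :
    sigmaZ i = Matrix.diagonal (fun s => pauliZ (s i) (s i)) := by
  ext s t
  simp only [sigmaZ, pauliAt, Matrix.of_apply, Matrix.diagonal_apply]
  by_cases h : s = t
  · subst h
    simp [Finset.prod_ite_eq']
  · rw [if_neg h]
    obtain ⟨j₀, hj₀⟩ := Function.ne_iff.mp h
    refine Finset.prod_eq_zero (Finset.mem_univ j₀) ?_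
    by_cases hji : j₀ = i
    · subst hji
      rw [if_pos rfl]
      have hz : ∀ a b : Fin 2, a ≠ b → pauliZ a b = 0 := by
        intro a b hab
        fin_cases a <;> fin_cases b <;> simp_all [pauliZ]
      exact hz _ _ hj₀
    · rw [if_neg hji, if_neg hj₀]

lemma sigmaZ_mul_comm {n : ℕ} (i j : Fin n) : sigmaZ i * sigmaZ j = sigmaZ j * sigmaZ i := by
  rw [sigmaZ_eq_diagonal, sigmaZ_eq_diagonal, Matrix.diagonal_mul_diagonal,
    Matrix.diagonal_mul_diagonal]
  ext s
  simp [mul_comm]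

/-- The MaxCut Hamiltonian `H_C = Σ_{{i,j} ∈ E} σ^z_i σ^z_j`. -/
def hamC (n : ℕ) (G : SimpleGraph (Fin n)) [DecidableRel G.Adj] :
    Matrix (QIdx n) (QIdx n) ℂ :=
  ∑ e ∈ G.edgeFinset,
    Sym2.lift ⟨fun i j => sigmaZ i * sigmaZ j, fun i j => sigmaZ_mul_comm i j⟩ e

/-- The mixing Hamiltonian `H_B = -Σ_i σ^x_i`. -/
def hamB (n : ℕ) : Matrix (QIdx n) (QIdx n) ℂ := -(∑ i : Fin n, sigmaX i)

/-- `U_B(β) = exp(-i β H_B)`. -/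
def uB (n : ℕ) (β : ℝ) : Matrix (QIdx n) (QIdx n) ℂ :=
  NormedSpace.exp ((-(Complex.I) * (β : ℂ)) • hamB n)

/-- `U_C(γ) = exp(-i γ H_C)`. -/
def uC (n : ℕ) (G : SimpleGraph (Fin n)) [DecidableRel G.Adj] (γ : ℝ) :
    Matrix (QIdx n) (QIdx n) ℂ :=
  NormedSpace.exp ((-(Complex.I) * (γ : ℂ)) • hamC n G)

/-- The plus state `|+⟩ = 2^{-n/2} (1,…,1)ᵀ`. -/
def plusState (n : ℕ) : QIdx n → ℂ := fun _ => ((Real.sqrt 2 : ℂ))⁻¹ ^ n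

/-- The `m`-th layer `U_B(β_{m+1}) U_C(γ_{m+1})` of the QAOA circuit (`m` is 0-indexed);
`1` if `m` is out of range. -/
def qaoaLayer (n : ℕ) (G : SimpleGraph (Fin n)) [DecidableRel G.Adj] {p : ℕ}
    (β γ : Fin p → ℝ) (m : ℕ) : Matrix (QIdx n) (QIdx n) ℂ :=
  if h : m < p then uB n (β ⟨m, h⟩) * uC n G (γ ⟨m, h⟩) else 1

/-- The ordered product of the (0-indexed) layers `a, a+1, …, a+len-1` of the QAOA circuit, with
higher layers acting later (to the left). -/
def uProd (n : ℕ) (G : SimpleGraph (Fin n)) [DecidableRel G.Adj] {p : ℕ}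
    (β γ : Fin p → ℝ) (a len : ℕ) : Matrix (QIdx n) (QIdx n) ℂ :=
  (((List.range' a len).reverse).map (qaoaLayer n G β γ)).prod

/-- The depth-`p` QAOA state `|β,γ⟩ = U_B(β_p) U_C(γ_p) ⋯ U_B(β_1) U_C(γ_1) |+⟩`. -/
def qaoaState (n : ℕ) (G : SimpleGraph (Fin n)) [DecidableRel G.Adj] {p : ℕ}
    (β γ : Fin p → ℝ) : QIdx n → ℂ :=
  (uProd n G β γ 0 p).mulVec (plusState n)

/-- The depth-`p` QAOA cost function `E_p(β,γ) = ⟨β,γ| H_C |β,γ⟩` as a real-valued function on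
`ℝ^p × ℝ^p`. -/
def energyE (n : ℕ) (G : SimpleGraph (Fin n)) [DecidableRel G.Adj] (p : ℕ)
    (x : (Fin p → ℝ) × (Fin p → ℝ)) : ℝ :=
  (star (qaoaState n G x.1 x.2) ⬝ᵥ (hamC n G).mulVec (qaoaState n G x.1 x.2)).re

/-- The point `Γ^{p+1}(i,j)` obtained from `(β⋆,γ⋆) ∈ ℝ^p × ℝ^p` by inserting a `0` at
position `i` in the `β`-part and at position `j` in the `γ`-part. -/
def padded {p : ℕ} (x : (Fin p → ℝ) × (Fin p → ℝ)) (i j : Fin (p + 1)) :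
    (Fin (p + 1) → ℝ) × (Fin (p + 1) → ℝ) :=
  (i.insertNth 0 x.1, j.insertNth 0 x.2)

/-- The coordinate direction in `ℝ^p × ℝ^p` corresponding to `β_l` (`Sum.inl l`) or
`γ_l` (`Sum.inr l`). -/
def coordDir {p : ℕ} : Fin p ⊕ Fin p → (Fin p → ℝ) × (Fin p → ℝ) :=
  Sum.elim (fun l => (Pi.single l 1, 0)) (fun l => (0, Pi.single l 1))

/-- Partial derivative of a real function on `ℝ^p × ℝ^p` in the coordinate direction `a`. -/
def pderiv' {p : ℕ} (f : ((Fin p → ℝ) × (Fin p → ℝ)) → ℝ)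
    (a : Fin p ⊕ Fin p) (x : (Fin p → ℝ) × (Fin p → ℝ)) : ℝ :=
  fderiv ℝ f x (coordDir a)

/-- The Hessian matrix of a real function on `ℝ^p × ℝ^p`, with rows and columns indexed by the
coordinates `β_1,…,β_p` (`Sum.inl`) and `γ_1,…,γ_p` (`Sum.inr`). -/
def hessian {p : ℕ} (f : ((Fin p → ℝ) × (Fin p → ℝ)) → ℝ)
    (x : (Fin p → ℝ) × (Fin p → ℝ)) : Matrix (Fin p ⊕ Fin p) (Fin p ⊕ Fin p) ℝ :=
  Matrix.of fun a b => pderiv' (pderiv' f b) a x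

/-- The commutator `[A, B] = AB - BA`. -/
def commMat {n : ℕ} (A B : Matrix (QIdx n) (QIdx n) ℂ) : Matrix (QIdx n) (QIdx n) ℂ :=
  A * B - B * A

end

noncomputable section Aux

open NormedSpace

attribute [local instance] Matrix.linftyOpSemiNormedRing Matrix.linftyOpNormedRing
  Matrix.linftyOpNormedAlgebra Matrix.linftyOpNormedAddCommGroup

variable {n : ℕ} {G : SimpleGraph (Fin n)} [DecidableRel G.Adj]

lemma smul_helper (M : Matrix (QIdx n) (QIdx n) ℂ) (t : ℝ) :
    (-Complex.I * (t:ℂ)) • M = t • ((-Complex.I) • M) := by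
  rw [← Complex.coe_smul, smul_smul]; congr 1; ring

lemma uB_add (s t : ℝ) : uB n (s + t) = uB n s * uB n t := by
  rw [uB, uB, uB, ← Matrix.exp_add_of_commute _ _ (((Commute.refl (hamB n)).smul_left _).smul_right _)]
  congr 1; push_cast; module

lemma uC_add (s t : ℝ) : uC n G (s + t) = uC n G s * uC n G t := by
  rw [uC, uC, uC, ← Matrix.exp_add_of_commute _ _ (((Commute.refl (hamC n G)).smul_left _).smul_right _)]
  congr 1; push_cast; module

lemma uB_zero : uB n (0:ℝ) = 1 := by simp [uB, NormedSpace.exp_zero]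
lemma uC_zero : uC n G (0:ℝ) = 1 := by simp [uC, NormedSpace.exp_zero]

lemma uB_diff : Differentiable ℝ (uB n) := by
  have h : uB n = fun t : ℝ => NormedSpace.exp (t • ((-Complex.I) • hamB n)) := by
    funext t; rw [uB, smul_helper]
  rw [h]; intro t
  exact (hasFDerivAt_exp_smul_const (𝕂 := ℝ) _ t).differentiableAt

lemma uC_diff : Differentiable ℝ (uC n G) := by
  have h : uC n G = fun t : ℝ => NormedSpace.exp (t • ((-Complex.I) • hamC n G)) := by
    funext t; rw [uC, smul_helper]
  rw [h]; intro t
  exact (hasFDerivAt_exp_smul_const (𝕂 := ℝ) _ t).differentiableAt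

variable {p : ℕ}

lemma uProd_nil (β γ : Fin p → ℝ) (a : ℕ) : uProd n G β γ a 0 = 1 := rfl

lemma uProd_concat (β γ : Fin p → ℝ) (a len : ℕ) :
    uProd n G β γ a (len + 1) = qaoaLayer n G β γ (a + len) * uProd n G β γ a len := by
  rw [uProd, uProd, List.range'_concat]
  simp

lemma uProd_append (β γ : Fin p → ℝ) (a m k : ℕ) :
    uProd n G β γ a (m + k) = uProd n G β γ (a + m) k * uProd n G β γ a m := by
  induction k with
  | zero => rw [uProd_nil, one_mul, Nat.add_zero]
  | succ l ih =>
      rw [← Nat.add_assoc, uProd_concat, ih, uProd_concat, Nat.add_assoc, mul_assoc]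

lemma uProd_congr {q : ℕ} (β γ : Fin p → ℝ) (β' γ' : Fin q → ℝ) (a a' len : ℕ)
    (h : ∀ ks : ℕ, ks < len → qaoaLayer n G β γ (a + ks) = qaoaLayer n G β' γ' (a' + ks)) :
    uProd n G β γ a len = uProd n G β' γ' a' len := by
  induction len with
  | zero => rfl
  | succ l ih =>
      rw [uProd_concat, uProd_concat, h l (Nat.lt_succ_self l),
        ih (fun ks hks => h ks (Nat.lt_succ_of_lt hks))]


lemma coord_diff1 {p : ℕ} (m : Fin p) :
    Differentiable ℝ (fun x : (Fin p → ℝ) × (Fin p → ℝ) => x.1 m) :=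
  (ContinuousLinearMap.proj m (R := ℝ) (φ := fun _ : Fin p => ℝ)).differentiable.comp
    differentiable_fst

lemma coord_diff2 {p : ℕ} (m : Fin p) :
    Differentiable ℝ (fun x : (Fin p → ℝ) × (Fin p → ℝ) => x.2 m) :=
  (ContinuousLinearMap.proj m (R := ℝ) (φ := fun _ : Fin p => ℝ)).differentiable.comp
    differentiable_snd

lemma qaoaLayer_diff {p : ℕ} (m : ℕ) :
    Differentiable ℝ (fun x : (Fin p → ℝ) × (Fin p → ℝ) => qaoaLayer n G x.1 x.2 m) := by
  unfold qaoaLayer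
  by_cases h : m < p
  · simp only [dif_pos h]
    exact ((uB_diff.comp (coord_diff1 ⟨m, h⟩)).mul (uC_diff.comp (coord_diff2 ⟨m, h⟩)))
  · simp only [dif_neg h]
    exact differentiable_const _

lemma uProd_diff {p : ℕ} (a len : ℕ) :
    Differentiable ℝ (fun x : (Fin p → ℝ) × (Fin p → ℝ) => uProd n G x.1 x.2 a len) := by
  induction len with
  | zero => simpa [uProd_nil] using differentiable_const (1 : Matrix (QIdx n) (QIdx n) ℂ)
  | succ l ih =>
      simp only [uProd_concat]
      exact (qaoaLayer_diff _).mul ih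

def entryCLM (s u : QIdx n) : Matrix (QIdx n) (QIdx n) ℂ →L[ℝ] ℂ :=
  LinearMap.toContinuousLinearMap
    { toFun := fun M => M s u
      map_add' := fun _ _ => rfl
      map_smul' := fun _ _ => rfl }

lemma entry_diff {p : ℕ} {F : (Fin p → ℝ) × (Fin p → ℝ) → Matrix (QIdx n) (QIdx n) ℂ}
    (hF : Differentiable ℝ F) (s u : QIdx n) :
    Differentiable ℝ (fun x => F x s u) :=
  ((entryCLM s u).differentiable.comp hF : _)

lemma state_diff (p : ℕ) (s : QIdx n) :
    Differentiable ℝ (fun x : (Fin p → ℝ) × (Fin p → ℝ) => qaoaState n G x.1 x.2 s) := by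
  unfold qaoaState Matrix.mulVec dotProduct
  exact Differentiable.fun_sum fun u _ =>
    (entry_diff (uProd_diff 0 p) s u).mul (differentiable_const _)

lemma energy_diff (p : ℕ) : Differentiable ℝ (energyE n G p) := by
  have h : energyE n G p = fun x : (Fin p → ℝ) × (Fin p → ℝ) =>
      (∑ s : QIdx n, (starRingEnd ℂ) (qaoaState n G x.1 x.2 s) *
        ∑ u : QIdx n, hamC n G s u * qaoaState n G x.1 x.2 u).re := by
    funext x
    simp [energyE, dotProduct, Matrix.mulVec, Pi.star_apply, RCLike.star_def]
  rw [h]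
  refine Complex.reCLM.differentiable.comp (Differentiable.fun_sum fun s _ => Differentiable.mul ?_ ?_)
  · exact Differentiable.star (state_diff p s)
  · exact Differentiable.fun_sum fun u _ => (differentiable_const _).mul (state_diff p u)

lemma star_sigmaZ (i : Fin n) : star (sigmaZ i) = sigmaZ i := by
  have h : ∀ a : Fin 2, star (pauliZ a a) = pauliZ a a := by
    intro a; fin_cases a <;> simp [pauliZ]
  rw [sigmaZ_eq_diagonal, Matrix.star_eq_conjTranspose, Matrix.diagonal_conjTranspose]
  exact congrArg Matrix.diagonal (funext fun s => h (s i))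

lemma star_hamC : star (hamC n G) = hamC n G := by
  rw [hamC, star_sum]
  refine Finset.sum_congr rfl fun e _ => ?_
  induction e using Sym2.ind with
  | _ i j =>
      show star (sigmaZ i * sigmaZ j) = sigmaZ i * sigmaZ j
      rw [StarMul.star_mul, star_sigmaZ, star_sigmaZ]
      exact (sigmaZ_mul_comm j i)

lemma uC_commute_hamC (c : ℝ) : Commute (uC n G c) (hamC n G) :=
  (((Commute.refl (hamC n G)).smul_left _).exp_left)

lemma star_uC_mul_uC (c : ℝ) : star (uC n G c) * uC n G c = 1 := by
  have hA : star ((-Complex.I * (c:ℂ)) • hamC n G) = (Complex.I * (c:ℂ)) • hamC n G := by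
    rw [star_smul, star_hamC]
    congr 1
    simp [Complex.ext_iff]
  rw [uC, NormedSpace.star_exp, hA,
    ← Matrix.exp_add_of_commute _ _ (((Commute.refl (hamC n G)).smul_left _).smul_right _),
    ← add_smul]
  have h0 : (Complex.I * (c:ℂ)) + (-Complex.I * (c:ℂ)) = 0 := by ring
  rw [h0, zero_smul, NormedSpace.exp_zero]

def mulVecCLM (v : QIdx n → ℂ) : Matrix (QIdx n) (QIdx n) ℂ →L[ℂ] (QIdx n → ℂ) :=
  LinearMap.toContinuousLinearMap
    { toFun := fun M => M.mulVec v
      map_add' := fun A B => Matrix.add_mulVec A B v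
      map_smul' := fun a A => Matrix.smul_mulVec a A v }

lemma mulVecCLM_apply (v : QIdx n → ℂ) (M : Matrix (QIdx n) (QIdx n) ℂ) :
    mulVecCLM v M = M.mulVec v := rfl

lemma exp_mulVec_eigen (M : Matrix (QIdx n) (QIdx n) ℂ) (v : QIdx n → ℂ) (μ : ℂ)
    (h : M.mulVec v = μ • v) :
    (NormedSpace.exp M).mulVec v = (NormedSpace.exp μ) • v := by
  have hpow : ∀ k : ℕ, (M ^ k).mulVec v = μ ^ k • v := by
    intro k
    induction k with
    | zero => simp [Matrix.one_mulVec]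
    | succ l ih =>
        rw [pow_succ, ← Matrix.mulVec_mulVec, h, Matrix.mulVec_smul, ih, smul_smul, pow_succ, mul_comm μ (μ ^ l)]
  have key : (mulVecCLM v) (NormedSpace.exp M) = (NormedSpace.exp μ) • v := by
    rw [NormedSpace.exp_eq_tsum ℂ]; beta_reduce
    erw [ContinuousLinearMap.map_tsum _ (NormedSpace.expSeries_summable' (𝕂 := ℂ) M)]
    have h2 : ∀ k : ℕ, (mulVecCLM v) (((k.factorial : ℂ))⁻¹ • M ^ k)
        = (((k.factorial : ℂ))⁻¹ • μ ^ k) • v := by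
      intro k
      rw [_root_.map_smul, mulVecCLM_apply, hpow k, smul_assoc]
    erw [tsum_congr h2, (NormedSpace.expSeries_summable' μ).tsum_smul_const,
      NormedSpace.exp_eq_tsum ℂ]
  rw [← mulVecCLM_apply, key]

lemma sigmaX_mulVec_plus (i : Fin n) : (sigmaX i).mulVec (plusState n) = plusState n := by
  funext s
  rw [Matrix.mulVec, dotProduct]
  simp only [sigmaX, pauliAt, Matrix.of_apply, plusState]
  rw [← Finset.sum_mul]
  have hps := Finset.prod_univ_sum (fun _ : Fin n => (Finset.univ : Finset (Fin 2)))
    (fun j a => if j = i then pauliX (s j) a else if s j = a then 1 else 0)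
  rw [Fintype.piFinset_univ] at hps
  have key : (∑ t : QIdx n, ∏ j,
      (if j = i then pauliX (s j) (t j) else if s j = t j then (1:ℂ) else 0)) = 1 := by
    rw [← hps]
    refine Finset.prod_eq_one fun j _ => ?_
    by_cases hj : j = i
    · subst hj
      simp only [if_pos rfl]
      have hr : ∀ a : Fin 2, ∑ b : Fin 2, pauliX a b = 1 := by
        intro a; fin_cases a <;> simp [pauliX, Fin.sum_univ_two]
      exact hr (s j)
    · simp [if_neg hj]
  rw [key, one_mul]

lemma hamB_mulVec_plus : (hamB n).mulVec (plusState n) = (-(n:ℂ)) • plusState n := by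
  rw [hamB, Matrix.neg_mulVec]
  have hs : (∑ i : Fin n, sigmaX i).mulVec (plusState n) = (n : ℂ) • plusState n := by
    have hm := map_sum (mulVecCLM (n := n) (plusState n)) (fun i => sigmaX i) Finset.univ
    rw [mulVecCLM_apply] at hm
    simp only [mulVecCLM_apply] at hm
    rw [hm]
    simp only [sigmaX_mulVec_plus]
    simp [Finset.sum_const, Nat.cast_smul_eq_nsmul]
  rw [hs, neg_smul]

lemma uB_mulVec_plus (b : ℝ) :
    (uB n b).mulVec (plusState n) = Complex.exp (Complex.I * b * n) • plusState n := by
  rw [uB]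
  have h : ((-Complex.I * (b:ℂ)) • hamB n).mulVec (plusState n)
      = (Complex.I * b * n) • plusState n := by
    rw [Matrix.smul_mulVec, hamB_mulVec_plus, smul_smul]
    congr 1; ring
  rw [exp_mulVec_eigen _ _ _ h, Complex.exp_eq_exp_ℂ]

section Ins
variable {p : ℕ}

lemma insertNth_nat_lt (i : Fin (p+1)) (b : ℝ) (β : Fin p → ℝ) (m : ℕ)
    (hm : m < i.val) (hq : m < p) (hq1 : m < p + 1) :
    (i.insertNth b β : Fin (p+1) → ℝ) ⟨m, hq1⟩ = β ⟨m, hq⟩ := by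
  have h1 : (⟨m, hq1⟩ : Fin (p+1)) = Fin.castSucc ⟨m, hq⟩ := rfl
  have h2 : Fin.castSucc (⟨m, hq⟩ : Fin p) < i := by
    simp only [Fin.lt_def, Fin.coe_castSucc]; exact hm
  rw [h1, ← Fin.succAbove_of_castSucc_lt i ⟨m, hq⟩ h2, Fin.insertNth_apply_succAbove]

lemma insertNth_nat_gt (i : Fin (p+1)) (b : ℝ) (β : Fin p → ℝ) (m : ℕ)
    (hm : i.val < m) (hq1 : m < p + 1) (hq : m - 1 < p) :
    (i.insertNth b β : Fin (p+1) → ℝ) ⟨m, hq1⟩ = β ⟨m - 1, hq⟩ := by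
  have h1 : (⟨m, hq1⟩ : Fin (p+1)) = Fin.succ ⟨m - 1, hq⟩ := by
    apply Fin.ext; simp; omega
  have h2 : i ≤ Fin.castSucc (⟨m - 1, hq⟩ : Fin p) := by
    simp only [Fin.le_def, Fin.coe_castSucc]; omega
  rw [h1, ← Fin.succAbove_of_le_castSucc i ⟨m - 1, hq⟩ h2, Fin.insertNth_apply_succAbove]

lemma insertNth_nat_same (i : Fin (p+1)) (b : ℝ) (β : Fin p → ℝ) (hq1 : i.val < p + 1) :
    (i.insertNth b β : Fin (p+1) → ℝ) ⟨i.val, hq1⟩ = b := by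
  have h1 : (⟨i.val, hq1⟩ : Fin (p+1)) = i := Fin.ext rfl
  rw [h1, Fin.insertNth_apply_same]

end Ins

variable {p : ℕ}

lemma qaoaLayer_eq {q q' : ℕ} (β' γ' : Fin q' → ℝ) (β γ : Fin q → ℝ) (m m' : ℕ)
    (h : m < q') (h' : m' < q)
    (h1 : β' ⟨m, h⟩ = β ⟨m', h'⟩) (h2 : γ' ⟨m, h⟩ = γ ⟨m', h'⟩) :
    qaoaLayer n G β' γ' m = qaoaLayer n G β γ m' := by
  rw [qaoaLayer, qaoaLayer, dif_pos h, dif_pos h', h1, h2]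

lemma uProd_one (β γ : Fin p → ℝ) (a : ℕ) :
    uProd n G β γ a 1 = qaoaLayer n G β γ a := by
  rw [show (1:ℕ) = 0 + 1 from rfl, uProd_concat, uProd_nil, Nat.add_zero, mul_one]

lemma qaoaLayer_apply (β γ : Fin p → ℝ) (m : ℕ) (h : m < p) :
    qaoaLayer n G β γ m = uB n (β ⟨m, h⟩) * uC n G (γ ⟨m, h⟩) := dif_pos h

/-- matched circuit decomposition -/
lemma circuit_matched (i : Fin (p+1)) (b c : ℝ) (β γ : Fin p → ℝ) :
    uProd n G (i.insertNth b β) (i.insertNth c γ) 0 (p+1)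
      = uProd n G β γ i.val (p - i.val) * (uB n b * uC n G c) * uProd n G β γ 0 i.val := by
  have hi : i.val ≤ p := Nat.lt_succ_iff.mp i.isLt
  have hsplit : p + 1 = i.val + (1 + (p - i.val)) := by omega
  have e1 : uProd n G (i.insertNth b β) (i.insertNth c γ) 0 (p+1)
      = uProd n G (i.insertNth b β) (i.insertNth c γ) 0 (i.val + (1 + (p - i.val))) :=
    congrArg _ hsplit
  rw [e1, uProd_append, Nat.zero_add, uProd_append, uProd_one]
  have hlow : uProd n G (i.insertNth b β) (i.insertNth c γ) 0 i.val
      = uProd n G β γ 0 i.val := by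
    refine uProd_congr _ _ _ _ _ _ _ fun ks hks => ?_
    refine qaoaLayer_eq _ _ _ _ _ _ (by omega) (by omega) ?_ ?_ <;>
      exact insertNth_nat_lt i _ _ _ (by omega) _ _
  have hhigh : uProd n G (i.insertNth b β) (i.insertNth c γ) (i.val + 1) (p - i.val)
      = uProd n G β γ i.val (p - i.val) := by
    refine uProd_congr _ _ _ _ _ _ _ fun ks hks => ?_
    refine qaoaLayer_eq _ _ _ _ _ _ (by omega) (by omega) ?_ ?_ <;>
      · rw [insertNth_nat_gt i _ _ _ (by omega) (by omega) (by omega)]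
        exact congrArg _ (Fin.mk_eq_mk.mpr (by omega))
  have hmid : qaoaLayer n G (i.insertNth b β) (i.insertNth c γ) i.val
      = uB n b * uC n G c := by
    rw [qaoaLayer_apply _ _ _ i.isLt, insertNth_nat_same, insertNth_nat_same]
  rw [hlow, hhigh, hmid, mul_assoc]

/-- mismatched circuit decomposition -/
lemma circuit_mis (i : Fin p) (b c : ℝ) (β γ : Fin p → ℝ) :
    uProd n G ((i.castSucc).insertNth b β : Fin (p+1) → ℝ) ((i.succ).insertNth c γ : Fin (p+1) → ℝ) 0 (p+1)
      = uProd n G β γ (i.val + 1) (p - 1 - i.val) *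
        ((uB n (β i) * uC n G c) * ((uB n b * uC n G (γ i)) * uProd n G β γ 0 i.val)) := by
  have hi : i.val < p := i.isLt
  have hsplit : p + 1 = i.val + (1 + (1 + (p - 1 - i.val))) := by omega
  set β' : Fin (p+1) → ℝ := (i.castSucc).insertNth b β with hβ'
  set γ' : Fin (p+1) → ℝ := (i.succ).insertNth c γ with hγ'
  have e1 : uProd n G β' γ' 0 (p+1) = uProd n G β' γ' 0 (i.val + (1 + (1 + (p - 1 - i.val)))) :=
    congrArg _ hsplit
  rw [e1, uProd_append, Nat.zero_add, uProd_append, uProd_append, uProd_one, uProd_one]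
  have hlow : uProd n G β' γ' 0 i.val = uProd n G β γ 0 i.val := by
    refine uProd_congr _ _ _ _ _ _ _ fun ks hks => ?_
    refine qaoaLayer_eq _ _ _ _ _ _ (by omega) (by omega) ?_ ?_
    · exact insertNth_nat_lt _ _ _ _ (by simp [Fin.coe_castSucc]; omega) _ _
    · exact insertNth_nat_lt _ _ _ _ (by simp [Fin.val_succ]; omega) _ _
  have hhigh : uProd n G β' γ' (i.val + 1 + 1) (p - 1 - i.val)
      = uProd n G β γ (i.val + 1) (p - 1 - i.val) := by
    refine uProd_congr _ _ _ _ _ _ _ fun ks hks => ?_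
    refine qaoaLayer_eq _ _ _ _ _ _ (by omega) (by omega) ?_ ?_
    · rw [hβ', insertNth_nat_gt _ _ _ _ (by simp [Fin.coe_castSucc]; omega) (by omega) (by omega)]
      exact congrArg _ (Fin.mk_eq_mk.mpr (by omega))
    · rw [hγ', insertNth_nat_gt _ _ _ _ (by simp [Fin.val_succ]; omega) (by omega) (by omega)]
      exact congrArg _ (Fin.mk_eq_mk.mpr (by omega))
  have hmid1 : qaoaLayer n G β' γ' i.val = uB n b * uC n G (γ i) := by
    rw [qaoaLayer_apply _ _ _ (by omega)]
    congr 1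
    · rw [hβ']
      have : (⟨i.val, by omega⟩ : Fin (p+1)) = i.castSucc := Fin.ext rfl
      rw [this, Fin.insertNth_apply_same]
    · rw [hγ', insertNth_nat_lt _ _ _ _ (by simp [Fin.val_succ]) i.isLt]
  have hmid2 : qaoaLayer n G β' γ' (i.val + 1) = uB n (β i) * uC n G c := by
    rw [qaoaLayer_apply _ _ _ (by omega)]
    congr 1
    · rw [hβ', insertNth_nat_gt _ _ _ _ (by simp [Fin.coe_castSucc]) (by omega) (by omega)]
      exact congrArg (fun r => uB n (β r)) (Fin.ext (show i.val + 1 - 1 = i.val by omega))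
    · rw [hγ']
      have : (⟨i.val + 1, by omega⟩ : Fin (p+1)) = i.succ := Fin.ext rfl
      rw [this, Fin.insertNth_apply_same]
  rw [hlow, hhigh, hmid1, hmid2, mul_assoc, mul_assoc]

lemma qaoaLayer_congr (β β' γ γ' : Fin p → ℝ) (m : ℕ)
    (h : ∀ hm : m < p, β ⟨m, hm⟩ = β' ⟨m, hm⟩ ∧ γ ⟨m, hm⟩ = γ' ⟨m, hm⟩) :
    qaoaLayer n G β γ m = qaoaLayer n G β' γ' m := by
  rw [qaoaLayer, qaoaLayer]
  by_cases hm : m < p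
  · rw [dif_pos hm, dif_pos hm, (h hm).1, (h hm).2]
  · rw [dif_neg hm, dif_neg hm]

lemma uProd_update (β β' γ γ' : Fin p → ℝ) (a len : ℕ)
    (h : ∀ m : ℕ, a ≤ m → m < a + len → ∀ hm : m < p,
      β ⟨m, hm⟩ = β' ⟨m, hm⟩ ∧ γ ⟨m, hm⟩ = γ' ⟨m, hm⟩) :
    uProd n G β γ a len = uProd n G β' γ' a len := by
  refine uProd_congr _ _ _ _ _ _ _ fun ks hks => ?_
  exact qaoaLayer_congr _ _ _ _ _ (fun hm => h (a + ks) (by omega) (by omega) hm)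

lemma update_apply_same (β : Fin p → ℝ) (j : Fin p) (b : ℝ) :
    (β + b • (Pi.single j 1 : Fin p → ℝ)) j = β j + b := by simp

lemma update_apply_ne (β : Fin p → ℝ) (j m : Fin p) (b : ℝ) (h : m ≠ j) :
    (β + b • (Pi.single j 1 : Fin p → ℝ)) m = β m := by simp [Pi.single_eq_of_ne h]

lemma energyE_circ_congr {q q' : ℕ} {x : (Fin q → ℝ) × (Fin q → ℝ)}
    {y : (Fin q' → ℝ) × (Fin q' → ℝ)}
    (h : uProd n G x.1 x.2 0 q = uProd n G y.1 y.2 0 q') :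
    energyE n G q x = energyE n G q' y := by
  unfold energyE qaoaState
  rw [h]

lemma quad_eq (A H : Matrix (QIdx n) (QIdx n) ℂ) (v : QIdx n → ℂ) :
    dotProduct (star (A.mulVec v)) (H.mulVec (A.mulVec v))
      = dotProduct (star v) ((star A * H * A).mulVec v) := by
  rw [Matrix.mulVec_mulVec, Matrix.star_mulVec, Matrix.dotProduct_mulVec,
    Matrix.vecMul_vecMul, ← Matrix.dotProduct_mulVec, Matrix.star_eq_conjTranspose,
    mul_assoc]

lemma energyE_phase {q q' : ℕ} {x : (Fin q → ℝ) × (Fin q → ℝ)}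
    {y : (Fin q' → ℝ) × (Fin q' → ℝ)} (e : ℂ) (he : star e * e = 1)
    (h : (uProd n G x.1 x.2 0 q).mulVec (plusState n)
      = e • (uProd n G y.1 y.2 0 q').mulVec (plusState n)) :
    energyE n G q x = energyE n G q' y := by
  unfold energyE qaoaState
  rw [h, star_smul, Matrix.mulVec_smul, smul_dotProduct, dotProduct_smul,
    smul_eq_mul, smul_eq_mul, ← mul_assoc, he, one_mul]

lemma energyE_conjinv {q q' : ℕ} {x : (Fin q → ℝ) × (Fin q → ℝ)}
    {y : (Fin q' → ℝ) × (Fin q' → ℝ)} (Q : Matrix (QIdx n) (QIdx n) ℂ)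
    (h : uProd n G x.1 x.2 0 q = Q * uProd n G y.1 y.2 0 q')
    (hQ : star Q * hamC n G * Q = hamC n G) :
    energyE n G q x = energyE n G q' y := by
  unfold energyE qaoaState
  rw [h, quad_eq, quad_eq]
  have h2 : star Q * (hamC n G * (Q * uProd n G y.1 y.2 0 q')) =
      hamC n G * uProd n G y.1 y.2 0 q' := by
    rw [← mul_assoc, ← mul_assoc, hQ]
  rw [StarMul.star_mul, mul_assoc, mul_assoc, h2, ← mul_assoc]

lemma mul_merge_uB (s t : ℝ) (R : Matrix (QIdx n) (QIdx n) ℂ) :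
    uB n s * (uB n t * R) = uB n (s + t) * R := by rw [← mul_assoc, ← uB_add]

lemma mul_merge_uC (s t : ℝ) (R : Matrix (QIdx n) (QIdx n) ℂ) :
    uC n G s * (uC n G t * R) = uC n G (s + t) * R := by rw [← mul_assoc, ← uC_add]

lemma E_pad_matched (i : Fin (p+1)) (β γ : Fin p → ℝ) :
    energyE n G (p+1) (i.insertNth 0 β, i.insertNth 0 γ) = energyE n G p (β, γ) := by
  refine energyE_circ_congr ?_
  show uProd n G (i.insertNth 0 β) (i.insertNth 0 γ) 0 (p+1) = uProd n G β γ 0 p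
  rw [circuit_matched, uB_zero, uC_zero, one_mul, mul_one]
  have e : uProd n G β γ 0 p = uProd n G β γ 0 (i.val + (p - i.val)) :=
    congrArg _ (by omega)
  rw [e, uProd_append, Nat.zero_add]

set_option maxHeartbeats 1000000 in
lemma E_matched_beta (i : Fin (p+1)) (hi : 0 < i.val) (b : ℝ) (β γ : Fin p → ℝ) :
    energyE n G (p+1) (i.insertNth b β, i.insertNth 0 γ)
      = energyE n G p
        (β + b • (Pi.single (⟨i.val - 1, by omega⟩ : Fin p) 1 : Fin p → ℝ), γ) := by
  set j : Fin p := ⟨i.val - 1, by omega⟩ with hj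
  set β'' : Fin p → ℝ := β + b • (Pi.single j 1 : Fin p → ℝ) with hβ''
  refine energyE_circ_congr ?_
  show uProd n G (i.insertNth b β) (i.insertNth 0 γ) 0 (p+1) = uProd n G β'' γ 0 p
  rw [circuit_matched, uC_zero, mul_one]
  have e0 : uProd n G β γ 0 i.val = uProd n G β γ 0 ((i.val - 1) + 1) :=
    congrArg _ (by omega)
  rw [e0, uProd_concat, Nat.zero_add, qaoaLayer_apply _ _ _ (show i.val - 1 < p by omega)]
  have e1 : uProd n G β'' γ 0 p = uProd n G β'' γ 0 (i.val + (p - i.val)) :=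
    congrArg _ (by omega)
  rw [e1, uProd_append, Nat.zero_add]
  have e2 : uProd n G β'' γ 0 i.val = uProd n G β'' γ 0 ((i.val - 1) + 1) :=
    congrArg _ (by omega)
  rw [e2, uProd_concat, Nat.zero_add, qaoaLayer_apply _ _ _ (show i.val - 1 < p by omega)]
  have hW : uProd n G β'' γ i.val (p - i.val) = uProd n G β γ i.val (p - i.val) := by
    refine (uProd_update _ _ _ _ _ _ fun m hm1 hm2 hm => ?_).symm
    refine ⟨(update_apply_ne β j ⟨m, hm⟩ b ?_).symm, rfl⟩
    exact Fin.ne_of_val_ne (show m ≠ i.val - 1 by omega)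
  have hU : uProd n G β'' γ 0 (i.val - 1) = uProd n G β γ 0 (i.val - 1) := by
    refine (uProd_update _ _ _ _ _ _ fun m hm1 hm2 hm => ?_).symm
    refine ⟨(update_apply_ne β j ⟨m, hm⟩ b ?_).symm, rfl⟩
    exact Fin.ne_of_val_ne (show m ≠ i.val - 1 by omega)
  have hsame : β'' ⟨i.val - 1, show i.val - 1 < p by omega⟩
      = β ⟨i.val - 1, show i.val - 1 < p by omega⟩ + b := update_apply_same β j b
  rw [hW, hU, hsame]
  simp only [mul_assoc]
  rw [mul_merge_uB, add_comm b]

set_option maxHeartbeats 1000000 in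
lemma E_matched_gamma (i : Fin (p+1)) (hi : i.val < p) (c : ℝ) (β γ : Fin p → ℝ) :
    energyE n G (p+1) (i.insertNth 0 β, i.insertNth c γ)
      = energyE n G p (β, γ + c • (Pi.single (⟨i.val, hi⟩ : Fin p) 1 : Fin p → ℝ)) := by
  set j : Fin p := ⟨i.val, hi⟩ with hj
  set γ'' : Fin p → ℝ := γ + c • (Pi.single j 1 : Fin p → ℝ) with hγ''
  refine energyE_circ_congr ?_
  show uProd n G (i.insertNth 0 β) (i.insertNth c γ) 0 (p+1) = uProd n G β γ'' 0 p
  rw [circuit_matched, uB_zero, one_mul]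
  have e0 : uProd n G β γ i.val (p - i.val)
      = uProd n G β γ i.val (1 + (p - i.val - 1)) := congrArg _ (by omega)
  rw [e0, uProd_append, uProd_one, qaoaLayer_apply _ _ _ hi]
  have e1 : uProd n G β γ'' 0 p
      = uProd n G β γ'' 0 ((i.val + 1) + (p - i.val - 1)) := congrArg _ (by omega)
  rw [e1, uProd_append, Nat.zero_add, uProd_concat, Nat.zero_add,
    qaoaLayer_apply _ _ _ hi]
  have hW : uProd n G β γ'' (i.val + 1) (p - i.val - 1)
      = uProd n G β γ (i.val + 1) (p - i.val - 1) := by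
    refine (uProd_update _ _ _ _ _ _ fun m hm1 hm2 hm => ?_).symm
    exact ⟨rfl, (update_apply_ne γ j ⟨m, hm⟩ c (Fin.ne_of_val_ne (show m ≠ i.val by omega))).symm⟩
  have hU : uProd n G β γ'' 0 i.val = uProd n G β γ 0 i.val := by
    refine (uProd_update _ _ _ _ _ _ fun m hm1 hm2 hm => ?_).symm
    exact ⟨rfl, (update_apply_ne γ j ⟨m, hm⟩ c (Fin.ne_of_val_ne (show m ≠ i.val by omega))).symm⟩
  have hsame : γ'' ⟨i.val, hi⟩ = γ ⟨i.val, hi⟩ + c := update_apply_same γ j c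
  rw [hW, hU, hsame]
  simp only [mul_assoc]
  rw [mul_merge_uC]

lemma E_matched_i0 (b : ℝ) (β γ : Fin p → ℝ) :
    energyE n G (p+1) ((0 : Fin (p+1)).insertNth b β, (0 : Fin (p+1)).insertNth 0 γ)
      = energyE n G p (β, γ) := by
  have he : star (Complex.exp (Complex.I * b * n)) * Complex.exp (Complex.I * b * n) = 1 := by
    rw [Complex.star_def, ← Complex.exp_conj, ← Complex.exp_add]
    have h0 : (starRingEnd ℂ) (Complex.I * b * n) + Complex.I * b * n = 0 := by
      simp [Complex.ext_iff]
    rw [h0, Complex.exp_zero]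
  refine energyE_phase _ he ?_
  show (uProd n G ((0 : Fin (p+1)).insertNth b β) ((0 : Fin (p+1)).insertNth 0 γ) 0 (p+1)).mulVec
      (plusState n) = _
  rw [circuit_matched, uC_zero, mul_one]
  show (uProd n G β γ 0 (p - 0) * uB n b * uProd n G β γ 0 0).mulVec (plusState n) = _
  rw [uProd_nil, mul_one, ← Matrix.mulVec_mulVec, uB_mulVec_plus, Matrix.mulVec_smul,
    Nat.sub_zero]

lemma E_matched_ip (c : ℝ) (β γ : Fin p → ℝ) :
    energyE n G (p+1) ((Fin.last p).insertNth 0 β, (Fin.last p).insertNth c γ)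
      = energyE n G p (β, γ) := by
  refine energyE_conjinv (uC n G c) ?_ ?_
  · show uProd n G ((Fin.last p).insertNth 0 β) ((Fin.last p).insertNth c γ) 0 (p+1)
      = uC n G c * uProd n G β γ 0 p
    rw [circuit_matched, uB_zero, one_mul]
    show uProd n G β γ p (p - p) * uC n G c * uProd n G β γ 0 p = _
    rw [Nat.sub_self, uProd_nil, one_mul]
  · rw [mul_assoc, ← (uC_commute_hamC c).eq, ← mul_assoc, star_uC_mul_uC, one_mul]

set_option maxHeartbeats 1000000 in
lemma E_mis_beta (i : Fin p) (b : ℝ) (β γ : Fin p → ℝ) :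
    energyE n G (p+1) ((i.castSucc).insertNth b β, (i.succ).insertNth 0 γ)
      = energyE n G p (β + b • (Pi.single i 1 : Fin p → ℝ), γ) := by
  set β'' : Fin p → ℝ := β + b • (Pi.single i 1 : Fin p → ℝ) with hβ''
  refine energyE_circ_congr ?_
  show uProd n G ((i.castSucc).insertNth b β : Fin (p+1) → ℝ)
      ((i.succ).insertNth 0 γ : Fin (p+1) → ℝ) 0 (p+1) = uProd n G β'' γ 0 p
  rw [circuit_mis, uC_zero, mul_one]
  have e1 : uProd n G β'' γ 0 p
      = uProd n G β'' γ 0 ((i.val + 1) + (p - 1 - i.val)) := congrArg _ (by omega)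
  rw [e1, uProd_append, Nat.zero_add, uProd_concat, Nat.zero_add,
    qaoaLayer_apply _ _ _ i.isLt]
  have hW : uProd n G β'' γ (i.val + 1) (p - 1 - i.val)
      = uProd n G β γ (i.val + 1) (p - 1 - i.val) := by
    refine (uProd_update _ _ _ _ _ _ fun m hm1 hm2 hm => ?_).symm
    exact ⟨(update_apply_ne β i ⟨m, hm⟩ b (Fin.ne_of_val_ne (show m ≠ i.val by omega))).symm, rfl⟩
  have hU : uProd n G β'' γ 0 i.val = uProd n G β γ 0 i.val := by
    refine (uProd_update _ _ _ _ _ _ fun m hm1 hm2 hm => ?_).symm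
    exact ⟨(update_apply_ne β i ⟨m, hm⟩ b (Fin.ne_of_val_ne (show m ≠ i.val by omega))).symm, rfl⟩
  have hsame : β'' ⟨i.val, i.isLt⟩ = β ⟨i.val, i.isLt⟩ + b := update_apply_same β i b
  rw [hW, hU, hsame]
  have hfin : β ⟨i.val, i.isLt⟩ = β i := congrArg β (Fin.ext rfl)
  rw [hfin]
  simp only [mul_assoc]
  rw [mul_merge_uB]

set_option maxHeartbeats 1000000 in
lemma E_mis_gamma (i : Fin p) (c : ℝ) (β γ : Fin p → ℝ) :
    energyE n G (p+1) ((i.castSucc).insertNth 0 β, (i.succ).insertNth c γ)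
      = energyE n G p (β, γ + c • (Pi.single i 1 : Fin p → ℝ)) := by
  set γ'' : Fin p → ℝ := γ + c • (Pi.single i 1 : Fin p → ℝ) with hγ''
  refine energyE_circ_congr ?_
  show uProd n G ((i.castSucc).insertNth 0 β : Fin (p+1) → ℝ)
      ((i.succ).insertNth c γ : Fin (p+1) → ℝ) 0 (p+1) = uProd n G β γ'' 0 p
  rw [circuit_mis, uB_zero, one_mul]
  have e1 : uProd n G β γ'' 0 p
      = uProd n G β γ'' 0 ((i.val + 1) + (p - 1 - i.val)) := congrArg _ (by omega)
  rw [e1, uProd_append, Nat.zero_add, uProd_concat, Nat.zero_add,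
    qaoaLayer_apply _ _ _ i.isLt]
  have hW : uProd n G β γ'' (i.val + 1) (p - 1 - i.val)
      = uProd n G β γ (i.val + 1) (p - 1 - i.val) := by
    refine (uProd_update _ _ _ _ _ _ fun m hm1 hm2 hm => ?_).symm
    exact ⟨rfl, (update_apply_ne γ i ⟨m, hm⟩ c (Fin.ne_of_val_ne (show m ≠ i.val by omega))).symm⟩
  have hU : uProd n G β γ'' 0 i.val = uProd n G β γ 0 i.val := by
    refine (uProd_update _ _ _ _ _ _ fun m hm1 hm2 hm => ?_).symm
    exact ⟨rfl, (update_apply_ne γ i ⟨m, hm⟩ c (Fin.ne_of_val_ne (show m ≠ i.val by omega))).symm⟩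
  have hsame : γ'' ⟨i.val, i.isLt⟩ = γ ⟨i.val, i.isLt⟩ + c := update_apply_same γ i c
  rw [hW, hU, hsame]
  have hfin : γ ⟨i.val, i.isLt⟩ = γ i := congrArg γ (Fin.ext rfl)
  rw [hfin]
  simp only [mul_assoc]
  rw [mul_merge_uC, add_comm c]

lemma single_insert (i : Fin (p+1)) (β : Fin p → ℝ) (m : Fin p) (t : ℝ) :
    (i.insertNth 0 β : Fin (p+1) → ℝ) + t • (Pi.single (i.succAbove m) 1 : Fin (p+1) → ℝ)
      = i.insertNth 0 (β + t • (Pi.single m 1 : Fin p → ℝ)) := by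
  funext r
  rcases eq_or_ne r i with heq | hr
  · subst heq
    simp [Fin.insertNth_apply_same, Pi.single_eq_of_ne (Fin.succAbove_ne r m).symm]
  · obtain ⟨m', rfl⟩ := Fin.exists_succAbove_eq hr
    simp only [Pi.add_apply, Pi.smul_apply, Fin.insertNth_apply_succAbove]
    congr 1
    rcases eq_or_ne m' m with rfl | hm
    · simp
    · have hne : i.succAbove m' ≠ i.succAbove m :=
        fun h => hm (Fin.succAbove_right_injective (p := i) h)
      rw [Pi.single_eq_of_ne hm, Pi.single_eq_of_ne hne]

lemma single_insert_same (i : Fin (p+1)) (β : Fin p → ℝ) (t : ℝ) :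
    (i.insertNth 0 β : Fin (p+1) → ℝ) + t • (Pi.single i 1 : Fin (p+1) → ℝ)
      = i.insertNth t β := by
  funext r
  rcases eq_or_ne r i with heq | hr
  · subst heq
    simp [Fin.insertNth_apply_same]
  · obtain ⟨m', rfl⟩ := Fin.exists_succAbove_eq hr
    simp [Fin.insertNth_apply_succAbove, Pi.single_eq_of_ne (Fin.succAbove_ne i m')]

lemma prod_add_smul1 {q : ℕ} (a b u : Fin q → ℝ) (t : ℝ) :
    ((a, b) : (Fin q → ℝ) × (Fin q → ℝ)) + t • ((u, (0 : Fin q → ℝ))) = (a + t • u, b) := by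
  rw [Prod.smul_mk, Prod.mk_add_mk, smul_zero, add_zero]

lemma prod_add_smul2 {q : ℕ} (a b u : Fin q → ℝ) (t : ℝ) :
    ((a, b) : (Fin q → ℝ) × (Fin q → ℝ)) + t • (((0 : Fin q → ℝ), u)) = (a, b + t • u) := by
  rw [Prod.smul_mk, Prod.mk_add_mk, smul_zero, add_zero]

lemma single_sum {q : ℕ} (w : Fin q → ℝ) :
    ∑ k, w k • (Pi.single k 1 : Fin q → ℝ) = w := by
  rw [← Finset.univ_sum_single w]
  refine Finset.sum_congr rfl fun k _ => ?_
  rw [← Pi.single_smul, smul_eq_mul, mul_one]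
  simp [Finset.univ_sum_single]

lemma clm_eq_zero {q : ℕ} (L : ((Fin q → ℝ) × (Fin q → ℝ)) →L[ℝ] ℝ)
    (h1 : ∀ k, L ((Pi.single k 1 : Fin q → ℝ), 0) = 0)
    (h2 : ∀ k, L (0, (Pi.single k 1 : Fin q → ℝ)) = 0) : L = 0 := by
  apply ContinuousLinearMap.ext
  intro v
  obtain ⟨v1, v2⟩ := v
  have hv : ((v1, v2) : (Fin q → ℝ) × (Fin q → ℝ))
      = (∑ k, v1 k • (((Pi.single k 1 : Fin q → ℝ), (0 : Fin q → ℝ)) :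
          (Fin q → ℝ) × (Fin q → ℝ)))
        + (∑ k, v2 k • (((0 : Fin q → ℝ), (Pi.single k 1 : Fin q → ℝ)) :
          (Fin q → ℝ) × (Fin q → ℝ))) := by
    apply Prod.ext
    · simp only [Prod.fst_add, Prod.fst_sum, Prod.smul_mk, smul_zero, Finset.sum_const_zero,
        add_zero, single_sum]
    · simp only [Prod.snd_add, Prod.snd_sum, Prod.smul_mk, smul_zero, Finset.sum_const_zero,
        zero_add, single_sum]
  rw [hv]
  simp only [map_add, map_sum, _root_.map_smul, h1, h2, mul_zero, smul_eq_mul, smul_zero,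
    Finset.sum_const_zero, add_zero, ContinuousLinearMap.zero_apply]

lemma fderiv_apply_eq_deriv {E : Type*} [NormedAddCommGroup E] [NormedSpace ℝ E]
    (f : E → ℝ) (hf : Differentiable ℝ f) (x v : E) :
    fderiv ℝ f x v = deriv (fun t : ℝ => f (x + t • v)) 0 :=
  ((hf x).lineDeriv_eq_fderiv).symm
end Aux

/-- stationarity of the padded points. -/
theorem stmt5 (n : ℕ) (hn : 1 ≤ n) (G : SimpleGraph (Fin n)) [DecidableRel G.Adj]
    (p : ℕ) (hp : 1 ≤ p) (β γ : Fin p → ℝ)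
    (hcrit : fderiv ℝ (energyE n G p) (β, γ) = 0) :
    (∀ i : Fin (p + 1), fderiv ℝ (energyE n G (p + 1)) (padded (β, γ) i i) = 0) ∧
    (∀ i : Fin p, fderiv ℝ (energyE n G (p + 1)) (padded (β, γ) i.castSucc i.succ) = 0) := by
  have hDp : Differentiable ℝ (energyE n G p) := energy_diff p
  have hDp1 : Differentiable ℝ (energyE n G (p+1)) := energy_diff (p+1)
  constructor
  · intro i
    refine clm_eq_zero _ (fun k => ?_) (fun k => ?_)
    · -- β-direction k
      rw [fderiv_apply_eq_deriv _ hDp1]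
      rcases eq_or_ne k i with rfl | hk
      · by_cases h0 : (k : ℕ) = 0
        · have hk0 : k = 0 := Fin.ext h0
          subst hk0
          have hfun : ∀ t : ℝ, energyE n G (p+1)
              (padded (β, γ) 0 0 + t • ((Pi.single 0 1 : Fin (p+1) → ℝ), 0))
              = energyE n G p (β, γ) := by
            intro t
            rw [padded, prod_add_smul1, single_insert_same]
            exact E_matched_i0 t β γ
          simp only [hfun]
          exact deriv_const _ _
        · have hfun : ∀ t : ℝ, energyE n G (p+1)
              (padded (β, γ) k k + t • ((Pi.single k 1 : Fin (p+1) → ℝ), 0))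
              = energyE n G p ((β, γ) +
                t • ((Pi.single (⟨(k:ℕ) - 1, by omega⟩ : Fin p) 1 : Fin p → ℝ), 0)) := by
            intro t
            rw [padded, prod_add_smul1, single_insert_same, prod_add_smul1]
            exact E_matched_beta k (by omega) t β γ
          simp only [hfun]
          rw [← fderiv_apply_eq_deriv _ hDp, hcrit]
          simp
      · obtain ⟨m, rfl⟩ := Fin.exists_succAbove_eq hk
        have hfun : ∀ t : ℝ, energyE n G (p+1)
            (padded (β, γ) i i + t • ((Pi.single (i.succAbove m) 1 : Fin (p+1) → ℝ), 0))
            = energyE n G p ((β, γ) + t • ((Pi.single m 1 : Fin p → ℝ), 0)) := by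
          intro t
          rw [padded, prod_add_smul1, single_insert, prod_add_smul1]
          exact E_pad_matched i _ γ
        simp only [hfun]
        rw [← fderiv_apply_eq_deriv _ hDp, hcrit]
        simp
    · -- γ-direction k
      rw [fderiv_apply_eq_deriv _ hDp1]
      rcases eq_or_ne k i with rfl | hk
      · by_cases h0 : (k : ℕ) = p
        · have hk0 : k = Fin.last p := Fin.ext (by simpa using h0)
          subst hk0
          have hfun : ∀ t : ℝ, energyE n G (p+1)
              (padded (β, γ) (Fin.last p) (Fin.last p)
                + t • ((0 : Fin (p+1) → ℝ), (Pi.single (Fin.last p) 1 : Fin (p+1) → ℝ)))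
              = energyE n G p (β, γ) := by
            intro t
            rw [padded, prod_add_smul2, single_insert_same]
            exact E_matched_ip t β γ
          simp only [hfun]
          exact deriv_const _ _
        · have hfun : ∀ t : ℝ, energyE n G (p+1)
              (padded (β, γ) k k + t • ((0 : Fin (p+1) → ℝ), (Pi.single k 1 : Fin (p+1) → ℝ)))
              = energyE n G p ((β, γ) +
                t • (0, (Pi.single (⟨(k:ℕ), by omega⟩ : Fin p) 1 : Fin p → ℝ))) := by
            intro t
            rw [padded, prod_add_smul2, single_insert_same, prod_add_smul2]
            exact E_matched_gamma k (by omega) t β γ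
          simp only [hfun]
          rw [← fderiv_apply_eq_deriv _ hDp, hcrit]
          simp
      · obtain ⟨m, rfl⟩ := Fin.exists_succAbove_eq hk
        have hfun : ∀ t : ℝ, energyE n G (p+1)
            (padded (β, γ) i i + t • ((0 : Fin (p+1) → ℝ), (Pi.single (i.succAbove m) 1 : Fin (p+1) → ℝ)))
            = energyE n G p ((β, γ) + t • (0, (Pi.single m 1 : Fin p → ℝ))) := by
          intro t
          rw [padded, prod_add_smul2, single_insert, prod_add_smul2]
          exact E_pad_matched i β _
        simp only [hfun]
        rw [← fderiv_apply_eq_deriv _ hDp, hcrit]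
        simp
  · intro i
    refine clm_eq_zero _ (fun k => ?_) (fun k => ?_)
    · rw [fderiv_apply_eq_deriv _ hDp1]
      rcases eq_or_ne k i.castSucc with rfl | hk
      · have hfun : ∀ t : ℝ, energyE n G (p+1)
            (padded (β, γ) i.castSucc i.succ
              + t • ((Pi.single i.castSucc 1 : Fin (p+1) → ℝ), 0))
            = energyE n G p ((β, γ) + t • ((Pi.single i 1 : Fin p → ℝ), 0)) := by
          intro t
          rw [padded, prod_add_smul1, single_insert_same, prod_add_smul1]
          exact E_mis_beta i t β γ
        simp only [hfun]
        rw [← fderiv_apply_eq_deriv _ hDp, hcrit]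
        simp
      · obtain ⟨m, rfl⟩ := Fin.exists_succAbove_eq hk
        have hfun : ∀ t : ℝ, energyE n G (p+1)
            (padded (β, γ) i.castSucc i.succ
              + t • ((Pi.single (i.castSucc.succAbove m) 1 : Fin (p+1) → ℝ), 0))
            = energyE n G p ((β, γ) + t • ((Pi.single m 1 : Fin p → ℝ), 0)) := by
          intro t
          rw [padded, prod_add_smul1, single_insert, prod_add_smul1]
          have := E_mis_beta (n := n) (G := G) i 0 (β + t • (Pi.single m 1 : Fin p → ℝ)) γ
          rw [zero_smul, add_zero] at this
          exact this
        simp only [hfun]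
        rw [← fderiv_apply_eq_deriv _ hDp, hcrit]
        simp
    · rw [fderiv_apply_eq_deriv _ hDp1]
      rcases eq_or_ne k i.succ with rfl | hk
      · have hfun : ∀ t : ℝ, energyE n G (p+1)
            (padded (β, γ) i.castSucc i.succ
              + t • ((0 : Fin (p+1) → ℝ), (Pi.single i.succ 1 : Fin (p+1) → ℝ)))
            = energyE n G p ((β, γ) + t • (0, (Pi.single i 1 : Fin p → ℝ))) := by
          intro t
          rw [padded, prod_add_smul2, single_insert_same, prod_add_smul2]
          exact E_mis_gamma i t β γ
        simp only [hfun]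
        rw [← fderiv_apply_eq_deriv _ hDp, hcrit]
        simp
      · obtain ⟨m, rfl⟩ := Fin.exists_succAbove_eq hk
        have hfun : ∀ t : ℝ, energyE n G (p+1)
            (padded (β, γ) i.castSucc i.succ
              + t • ((0 : Fin (p+1) → ℝ), (Pi.single (i.succ.succAbove m) 1 : Fin (p+1) → ℝ)))
            = energyE n G p ((β, γ) + t • (0, (Pi.single m 1 : Fin p → ℝ))) := by
          intro t
          rw [padded, prod_add_smul2, single_insert, prod_add_smul2]
          have := E_mis_gamma (n := n) (G := G) i 0 β (γ + t • (Pi.single m 1 : Fin p → ℝ))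
          rw [zero_smul, add_zero] at this
          exact this
        simp only [hfun]
        rw [← fderiv_apply_eq_deriv _ hDp, hcrit]
        simp
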